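/- Let Y ⊆ [0,1] be compact and countable, X = Y × {0,1} ⊆ [0,1]² with the Euclidean metric, and define rk(y) as the Cantor–Bendixson rank of y in Y (the least β with y ∉ Y^{β+1}). Define f : X → X by f(y,i) = (y,i) if rk(y) is even and f(y,i) = (y,1−i) if rk(y) is odd. Suppose that every point y ∈ Y¹ is the limit of a sequence of distinct points yₙ ∈ Y with rk(yₙ) < rk(y) and rk(yₙ) of parity opposite to rk(y). Then for every 0 < ε < 1, the oscillation derivative X¹_{ε,f} equals the Cantor–Bendixson derivative X¹ of X. -/

import Mathlib

open Filter
open scoped ENNReal NNReal Topology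

/-- The Cantor–Bendixson derivative of a set: its limit (accumulation) points lying in it. -/
def cbDeriv {Z : Type*} [TopologicalSpace Z] (A : Set Z) : Set Z :=
  {x ∈ A | AccPt x (𝓟 A)}

/-- Transfinite iterates of the Cantor–Bendixson derivative starting from `A`. -/
noncomputable def cbIterFrom {Z : Type} [TopologicalSpace Z] (A : Set Z) (o : Ordinal.{0}) :
    Set Z :=
  Ordinal.limitRecOn o A (fun _ ih => cbDeriv ih)
    (fun o _ ih => ⋂ (b : {β : Ordinal.{0} // β < o}), ih b.1 b.2)

/-- The Cantor–Bendixson rank of a point `y` in `Y`: the least `β` with `y ∉ Y^(β+1)`. -/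
noncomputable def rkIn (Y : Set ℝ) (y : ℝ) : Ordinal.{0} :=
  sInf {β : Ordinal.{0} | y ∉ cbIterFrom Y (β + 1)}

/-- The oscillation of `f` at `x`. -/
noncomputable def osc {Z : Type*} [MetricSpace Z] (f : Z → Z) (x : Z) : ℝ≥0∞ :=
  ⨅ (V : Set Z) (_ : IsOpen V) (_ : x ∈ V), EMetric.diam (f '' V)

lemma coord_abs_le_dist (p q : EuclideanSpace ℝ (Fin 2)) (i : Fin 2) :
    |p i - q i| ≤ dist p q := by
  rw [EuclideanSpace.dist_eq, Fin.sum_univ_two]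
  have h : |p i - q i| = Real.sqrt (dist (p i) (q i) ^ 2) := by
    rw [Real.sqrt_sq dist_nonneg, Real.dist_eq]
  rw [h]
  apply Real.sqrt_le_sqrt
  fin_cases i <;> simp <;> positivity

lemma ord_mod_two (o : Ordinal.{0}) : o % 2 = 0 ∨ o % 2 = 1 :=
  Ordinal.le_one_iff.mp (Order.lt_succ_iff.mp (by
    simpa using Ordinal.mod_lt o (by norm_num : (2 : Ordinal) ≠ 0)))


/-- Let `Y ⊆ [0,1]` be compact and countable, `X = Y × {0,1} ⊆ ℝ²` with the Euclidean
metric, and let `f` fix `(y,i)` when `rk y` is even and flip the second coordinate when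
`rk y` is odd (parity of an ordinal `β + n` being the parity of `n`, i.e. `· % 2`).
If every `y ∈ Y¹` is a limit of distinct points of strictly smaller rank of opposite
parity, then for every `0 < ε < 1` the oscillation derivative `X¹_{ε,f}` equals the
Cantor–Bendixson derivative `X¹` (the set of limit points of `X`). -/
theorem stmt18 (Y : Set ℝ) (hYsub : Y ⊆ Set.Icc 0 1) (hYcomp : IsCompact Y)
    (hYcount : Y.Countable)
    (X : Set (EuclideanSpace ℝ (Fin 2)))
    (hX : X = {p : EuclideanSpace ℝ (Fin 2) | p 0 ∈ Y ∧ (p 1 = 0 ∨ p 1 = 1)})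
    (f : X → X)
    (hf : ∀ x : X,
      (rkIn Y ((x : EuclideanSpace ℝ (Fin 2)) 0) % 2 = 0 → f x = x) ∧
      (rkIn Y ((x : EuclideanSpace ℝ (Fin 2)) 0) % 2 ≠ 0 →
        (f x : EuclideanSpace ℝ (Fin 2)) 0 = (x : EuclideanSpace ℝ (Fin 2)) 0 ∧
        (f x : EuclideanSpace ℝ (Fin 2)) 1 = 1 - (x : EuclideanSpace ℝ (Fin 2)) 1))
    (happrox : ∀ y ∈ cbDeriv Y, ∃ g : ℕ → ℝ, Function.Injective g ∧ (∀ n, g n ∈ Y) ∧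
      Tendsto g atTop (𝓝 y) ∧
      ∀ n, rkIn Y (g n) < rkIn Y y ∧ rkIn Y (g n) % 2 ≠ rkIn Y y % 2)
    (ε : ℝ≥0) (hε0 : 0 < ε) (hε1 : ε < 1) :
    {x : X | (ε : ℝ≥0∞) ≤ osc f x} = {x : X | (𝓝[≠] x).NeBot} := by
  subst hX
  ext x
  simp only [Set.mem_setOf_eq]
  constructor
  · -- if ε ≤ osc then x is not isolated
    intro hosc
    by_contra hiso
    have hbot : 𝓝[≠] x = ⊥ := not_neBot.mp hiso
    have hopen := (isOpen_singleton_iff_punctured_nhds x).mpr hbot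
    have h0 : osc f x ≤ EMetric.diam (f '' {x}) := by
      refine le_trans (iInf_le _ {x}) ?_
      exact le_trans (iInf_le _ hopen) (iInf_le _ rfl)
    rw [Set.image_singleton, show EMetric.diam ({f x} : Set _) = 0 from Metric.ediam_singleton] at h0
    have : (ε : ℝ≥0∞) = 0 := le_antisymm (le_trans hosc h0) zero_le
    exact absurd (ENNReal.coe_eq_zero.mp this) hε0.ne'
  · -- if x is a limit point then ε ≤ osc
    intro hne
    set y : ℝ := (x : EuclideanSpace ℝ (Fin 2)) 0 with hy
    have hxY : y ∈ Y := x.2.1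
    have hx1 : (x : EuclideanSpace ℝ (Fin 2)) 1 = 0 ∨ (x : EuclideanSpace ℝ (Fin 2)) 1 = 1 :=
      x.2.2
    -- y is an accumulation point of Y
    have hacc : AccPt y (𝓟 Y) := by
      rw [accPt_iff_nhds]
      intro U hU
      obtain ⟨r, hr, hball⟩ := Metric.mem_nhds_iff.mp hU
      set r' := min r (1/2) with hr'
      have hr'0 : 0 < r' := lt_min hr (by norm_num)
      have hmem : Metric.ball x r' ∩ {x}ᶜ ∈ 𝓝[≠] x :=
        inter_mem (mem_nhdsWithin_of_mem_nhds (Metric.ball_mem_nhds x hr'0))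
          self_mem_nhdsWithin
      obtain ⟨z, hz1, hz2⟩ := hne.nonempty_of_mem hmem
      have hdist : dist (z : EuclideanSpace ℝ (Fin 2)) (x : EuclideanSpace ℝ (Fin 2)) < r' :=
        by simpa [Subtype.dist_eq] using Metric.mem_ball.mp hz1
      have hc1 : |(z : EuclideanSpace ℝ (Fin 2)) 1 - (x : EuclideanSpace ℝ (Fin 2)) 1| < 1/2 :=
        lt_of_le_of_lt (coord_abs_le_dist _ _ 1) (lt_of_lt_of_le hdist (min_le_right _ _))
      have hz1' : (z : EuclideanSpace ℝ (Fin 2)) 1 = (x : EuclideanSpace ℝ (Fin 2)) 1 := by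
        rcases z.2.2 with h | h <;> rcases hx1 with h' | h' <;> rw [h, h'] <;>
          first | rfl | (exfalso; rw [h, h'] at hc1; norm_num at hc1)
      have hz0 : (z : EuclideanSpace ℝ (Fin 2)) 0 ≠ y := by
        intro h
        apply hz2
        have : (z : EuclideanSpace ℝ (Fin 2)) = (x : EuclideanSpace ℝ (Fin 2)) := by
          ext i
          fin_cases i
          · exact h
          · exact hz1'
        exact Subtype.ext this
      refine ⟨(z : EuclideanSpace ℝ (Fin 2)) 0, ⟨hball ?_, z.2.1⟩, hz0⟩
      have : |(z : EuclideanSpace ℝ (Fin 2)) 0 - y| < r :=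
        lt_of_le_of_lt (coord_abs_le_dist _ _ 0) (lt_of_lt_of_le hdist (min_le_left _ _))
      simpa [Metric.mem_ball, Real.dist_eq] using this
    obtain ⟨g, hginj, hgY, hgtend, hgrk⟩ := happrox y ⟨hxY, hacc⟩
    -- show ε ≤ osc
    refine le_iInf fun V => le_iInf fun hV => le_iInf fun hxV => ?_
    obtain ⟨r, hr0, hball⟩ := Metric.isOpen_iff.mp hV x hxV
    obtain ⟨N, hN⟩ := (Metric.tendsto_atTop.mp hgtend) r hr0
    have hgN := hN N le_rfl
    -- build the point p = (g N, x 1)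
    set pv : EuclideanSpace ℝ (Fin 2) := !₂[g N, (x : EuclideanSpace ℝ (Fin 2)) 1] with hpv
    have hpv0 : pv 0 = g N := rfl
    have hpv1 : pv 1 = (x : EuclideanSpace ℝ (Fin 2)) 1 := rfl
    have hpX : pv ∈ {p : EuclideanSpace ℝ (Fin 2) | p 0 ∈ Y ∧ (p 1 = 0 ∨ p 1 = 1)} :=
      ⟨by rw [hpv0]; exact hgY N, by rw [hpv1]; exact hx1⟩
    set p : {p : EuclideanSpace ℝ (Fin 2) | p 0 ∈ Y ∧ (p 1 = 0 ∨ p 1 = 1)} := ⟨pv, hpX⟩ with hp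
    have hp1 : (p : EuclideanSpace ℝ (Fin 2)) 1 = (x : EuclideanSpace ℝ (Fin 2)) 1 := hpv1
    have hdistpx : dist p x = |g N - y| := by
      rw [Subtype.dist_eq, EuclideanSpace.dist_eq, Fin.sum_univ_two]
      simp only [show (p : EuclideanSpace ℝ (Fin 2)) 0 = g N from hpv0, hp1, dist_self, ← hy]
      rw [Real.dist_eq]
      rw [show |g N - y| ^ 2 + (0:ℝ) ^ 2 = |g N - y| ^ 2 by ring, Real.sqrt_sq_eq_abs,
        abs_abs]
    have hpV : p ∈ V := hball (by rw [Metric.mem_ball, hdistpx]; simpa [Real.dist_eq] using hgN)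
    -- second coordinates of f x and f p differ by 1
    have hrk := hgrk N
    have hfx1 : |(f x : EuclideanSpace ℝ (Fin 2)) 1 - (f p : EuclideanSpace ℝ (Fin 2)) 1| = 1 := by
      have hpcoord : (p : EuclideanSpace ℝ (Fin 2)) 0 = g N := hpv0
      rcases ord_mod_two (rkIn Y y) with h0 | h1
      · -- rk y even: f x = x, f p flips
        have hfx := (hf x).1 h0
        have hgodd : rkIn Y ((p : EuclideanSpace ℝ (Fin 2)) 0) % 2 ≠ 0 := by
          rw [hpcoord]
          intro h; exact hrk.2 (h.trans h0.symm)
        have hfp := ((hf p).2 hgodd).2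
        rw [hfx, hfp, hp1]
        rcases hx1 with h | h <;> rw [h] <;> norm_num
      · -- rk y odd: f x flips, f p fixed
        have hfx := ((hf x).2 (by rw [← hy] at *; rw [h1]; norm_num)).2
        have hgeven : rkIn Y ((p : EuclideanSpace ℝ (Fin 2)) 0) % 2 = 0 := by
          rw [hpcoord]
          rcases ord_mod_two (rkIn Y (g N)) with h | h
          · exact h
          · exact absurd (h.trans h1.symm) hrk.2
        have hfp := (hf p).1 hgeven
        rw [hfx, hfp, hp1]
        rcases hx1 with h | h <;> rw [h] <;> norm_num
    have hd1 : (1 : ℝ) ≤ dist (f x) (f p) := by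
      rw [Subtype.dist_eq]
      calc (1:ℝ) = |(f x : EuclideanSpace ℝ (Fin 2)) 1 - (f p : EuclideanSpace ℝ (Fin 2)) 1| :=
            hfx1.symm
        _ ≤ _ := coord_abs_le_dist _ _ 1
    have hed : (1 : ℝ≥0∞) ≤ edist (f x) (f p) := by
      rw [edist_dist]
      calc (1 : ℝ≥0∞) = ENNReal.ofReal 1 := by simp
        _ ≤ _ := ENNReal.ofReal_le_ofReal hd1
    calc (ε : ℝ≥0∞) ≤ 1 := by
          exact_mod_cast hε1.le
      _ ≤ edist (f x) (f p) := hed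
      _ ≤ EMetric.diam (f '' V) :=
          EMetric.edist_le_diam_of_mem (Set.mem_image_of_mem f hxV) (Set.mem_image_of_mem f hpV)
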